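/- If a group G acts on a set X and there are pairwise disjoint nonempty subsets X_1, ..., X_m (m ≥ 2) of X and subgroups G_1, ..., G_m of G with g • X_s ⊆ X_i for all nontrivial g ∈ G_i and i ≠ s, and some G_i has order at least 3, then for any nontrivial reduced word g = h_1 h_2 ... h_r with consecutive letters from distinct subgroups (each h_t a nontrivial element of some G_{i_t}, i_t ≠ i_{t+1}), g is a nontrivial element of G. -/

import Mathlib

section PingPongAux

variable {G X : Type*} [Group G] [MulAction G X] {m : ℕ}
variable {H : Fin m → Subgroup G} {Xs : Fin m → Set X}

private theorem pp_ping
    (hpp : ∀ i s, i ≠ s → ∀ g ∈ H i, g ≠ 1 → ∀ x ∈ Xs s, g • x ∈ Xs i) :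
    ∀ (L : List (Fin m × G)) (hL : L ≠ []),
      (∀ p ∈ L, p.2 ∈ H p.1 ∧ p.2 ≠ 1) → (L.Chain' fun p q => p.1 ≠ q.1) →
      ∀ s, s ≠ (L.getLast hL).1 → ∀ x ∈ Xs s,
        (L.map Prod.snd).prod • x ∈ Xs (L.head hL).1
  | [], hL, _, _, _, _, _, _ => absurd rfl hL
  | [p], _, hmem, _, s, hs, x, hx => by
      have hp := hmem p (List.mem_singleton_self p)
      simpa using hpp p.1 s (fun e => hs (by simp [e])) p.2 hp.1 hp.2 x hx
  | p :: q :: L, _, hmem, hch, s, hs, x, hx => by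
      have hrec := pp_ping hpp (q :: L) (List.cons_ne_nil q L)
        (fun a ha => hmem a (List.mem_cons_of_mem p ha)) hch.tail s
        (by rwa [List.getLast_cons (List.cons_ne_nil q L)] at hs) x hx
      have hp := hmem p (List.mem_cons_self)
      have hne : p.1 ≠ q.1 := (List.isChain_cons_cons.mp hch).1
      simpa [mul_smul] using hpp p.1 q.1 hne p.2 hp.1 hp.2 _ hrec

private theorem pp_closed (hm : 2 ≤ m) (hne : ∀ i, (Xs i).Nonempty)
    (hdisj : Pairwise (Function.onFun Disjoint Xs))
    (hpp : ∀ i s, i ≠ s → ∀ g ∈ H i, g ≠ 1 → ∀ x ∈ Xs s, g • x ∈ Xs i)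
    (L : List (Fin m × G)) (hL : L ≠ [])
    (hmem : ∀ p ∈ L, p.2 ∈ H p.1 ∧ p.2 ≠ 1) (hch : L.Chain' fun p q => p.1 ≠ q.1)
    (hcl : (L.head hL).1 = (L.getLast hL).1) :
    (L.map Prod.snd).prod ≠ 1 := by
  haveI : Nontrivial (Fin m) :=
    ⟨⟨⟨0, by omega⟩, ⟨1, by omega⟩, fun e => absurd (congrArg Fin.val e) (by norm_num)⟩⟩
  obtain ⟨s, hs⟩ := exists_ne (L.head hL).1
  obtain ⟨x, hx⟩ := hne s
  intro he
  have := pp_ping hpp L hL hmem hch s (hcl ▸ hs) x hx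
  rw [he, one_smul] at this
  exact Set.disjoint_left.mp (hdisj hs) hx this

private theorem pp_open (hm : 2 ≤ m) (hne : ∀ i, (Xs i).Nonempty)
    (hdisj : Pairwise (Function.onFun Disjoint Xs))
    (hpp : ∀ i s, i ≠ s → ∀ g ∈ H i, g ≠ 1 → ∀ x ∈ Xs s, g • x ∈ Xs i)
    (L : List (Fin m × G)) (hL : L ≠ [])
    (hmem : ∀ p ∈ L, p.2 ∈ H p.1 ∧ p.2 ≠ 1) (hch : L.Chain' fun p q => p.1 ≠ q.1)
    (hop : (L.head hL).1 ≠ (L.getLast hL).1)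
    (hcard : 3 ≤ Cardinal.mk (H (L.head hL).1)) :
    (L.map Prod.snd).prod ≠ 1 := by
  obtain ⟨p, T, rfl⟩ := List.exists_cons_of_ne_nil hL
  cases T with
  | nil => exact absurd rfl hop
  | cons q T' =>
    have hTne : (q :: T') ≠ [] := List.cons_ne_nil q T'
    have hp := hmem p List.mem_cons_self
    have hhead : ((p :: q :: T').head hL) = p := rfl
    rw [hhead] at hop hcard
    rw [List.getLast_cons hTne] at hop
    obtain ⟨z, hz1, hz2⟩ := Cardinal.three_le hcard 1 ⟨p.2⁻¹, inv_mem hp.1⟩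
    set a : G := (z : G) with ha
    have ha1 : a ≠ 1 := fun e => hz1 (Subtype.ext e)
    have ha2 : a * p.2 ≠ 1 := fun e => hz2 (Subtype.ext (eq_inv_of_mul_eq_one_left e))
    set L' : List (Fin m × G) := (p.1, a * p.2) :: ((q :: T') ++ [(p.1, a⁻¹)]) with hL'
    have hL'ne : L' ≠ [] := List.cons_ne_nil _ _
    have hmem' : ∀ b ∈ L', b.2 ∈ H b.1 ∧ b.2 ≠ 1 := by
      intro b hb
      rw [hL', List.mem_cons, List.mem_append, List.mem_singleton] at hb
      rcases hb with rfl | hb | rfl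
      · exact ⟨mul_mem z.2 hp.1, ha2⟩
      · exact hmem b (List.mem_cons_of_mem p hb)
      · exact ⟨inv_mem z.2, inv_ne_one.mpr ha1⟩
    have hch' : L'.Chain' fun b c => b.1 ≠ c.1 := by
      rw [hL', List.Chain', List.isChain_cons]
      constructor
      · intro y hy
        rw [List.head?_append_of_ne_nil _ hTne, List.head?_eq_head hTne] at hy
        cases hy
        exact (List.isChain_cons_cons.mp hch).1
      · rw [List.isChain_append]
        refine ⟨hch.tail, List.isChain_singleton _, ?_⟩
        intro y hy c hc
        rw [List.getLast?_eq_getLast hTne] at hy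
        cases hy
        simp only [List.head?_cons, Option.mem_some_iff] at hc
        subst hc
        exact fun e => hop e.symm
    have hcl' : (L'.head hL'ne).1 = (L'.getLast hL'ne).1 := by
      have h2 : L'.getLast hL'ne = (p.1, a⁻¹) := by
        show ((p.1, a * p.2) :: (q :: T' ++ [(p.1, a⁻¹)])).getLast (List.cons_ne_nil _ _)
          = (p.1, a⁻¹)
        simp
      rw [h2]
      rfl
    have hprod := pp_closed hm hne hdisj hpp L' hL'ne hmem' hch' hcl'
    intro he
    apply hprod
    rw [List.map_cons, List.prod_cons] at he
    have hP : ((q :: T').map Prod.snd).prod = p.2⁻¹ := eq_inv_of_mul_eq_one_right he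
    show (((p.1, a * p.2) :: ((q :: T') ++ [(p.1, a⁻¹)])).map Prod.snd).prod = 1
    rw [List.map_cons, List.map_append, List.prod_cons, List.prod_append, hP]
    simp [mul_assoc]

end PingPongAux

theorem stmt9 {G X : Type*} [Group G] [MulAction G X] {m : ℕ} (hm : 2 ≤ m)
    (H : Fin m → Subgroup G) (Xs : Fin m → Set X)
    (hne : ∀ i, (Xs i).Nonempty)
    (hdisj : Pairwise (Function.onFun Disjoint Xs))
    (hpp : ∀ i s, i ≠ s → ∀ g ∈ H i, g ≠ 1 → ∀ x ∈ Xs s, g • x ∈ Xs i)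
    (hbig : ∃ i, 3 ≤ Cardinal.mk (H i))
    {r : ℕ} (hr : 0 < r) (ι : Fin r → Fin m) (h : Fin r → G)
    (hmem : ∀ t, h t ∈ H (ι t)) (hnt : ∀ t, h t ≠ 1)
    (halt : ∀ t : Fin r, ∀ ht : t.val + 1 < r, ι t ≠ ι ⟨t.val + 1, ht⟩) :
    (List.ofFn h).prod ≠ 1 := by
  set L : List (Fin m × G) := List.ofFn (fun t => (ι t, h t)) with hLdef
  have hLlen : L.length = r := by simp [hLdef]
  have hL : L ≠ [] := by
    intro e; rw [← List.length_eq_zero_iff] at e; omega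
  have hprodeq : (List.ofFn h).prod = (L.map Prod.snd).prod := by
    rw [hLdef, List.map_ofFn]; rfl
  have hmem' : ∀ p ∈ L, p.2 ∈ H p.1 ∧ p.2 ≠ 1 := by
    intro p hp
    rw [hLdef, List.mem_ofFn] at hp
    obtain ⟨t, rfl⟩ := hp
    exact ⟨hmem t, hnt t⟩
  have hch : L.Chain' fun p q => p.1 ≠ q.1 := by
    show List.Chain' (fun p q => p.1 ≠ q.1) (List.ofFn (fun t => (ι t, h t)))
    rw [List.Chain', List.isChain_iff_getElem]
    intro i hi
    have hi' : i < r - 1 := by rw [List.length_ofFn] at hi; omega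
    have h1 : i < r := by omega
    have h2 : i + 1 < r := by omega
    rw [List.getElem_ofFn, List.getElem_ofFn]
    exact halt ⟨i, h1⟩ h2
  rw [hprodeq]
  by_cases hcl : (L.head hL).1 = (L.getLast hL).1
  · exact pp_closed hm hne hdisj hpp L hL hmem' hch hcl
  · obtain ⟨k, hk⟩ := hbig
    by_cases hk0 : k = (L.head hL).1
    · exact pp_open hm hne hdisj hpp L hL hmem' hch hcl (hk0 ▸ hk)
    by_cases hkl : k = (L.getLast hL).1
    · -- reverse the word
      set L'' : List (Fin m × G) := (L.map fun p => (p.1, p.2⁻¹)).reverse with hL''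
      have hL''ne : L'' ≠ [] := by simp [hL'', hL]
      have hmem'' : ∀ p ∈ L'', p.2 ∈ H p.1 ∧ p.2 ≠ 1 := by
        intro p hp
        rw [hL'', List.mem_reverse, List.mem_map] at hp
        obtain ⟨q, hq, rfl⟩ := hp
        exact ⟨inv_mem (hmem' q hq).1, inv_ne_one.mpr (hmem' q hq).2⟩
      have hch'' : L''.Chain' fun p q => p.1 ≠ q.1 := by
        rw [hL'', List.Chain', List.isChain_reverse, List.isChain_map]
        exact hch.imp fun a b hab => Ne.symm hab
      have hhead'' : (L''.head hL''ne).1 = (L.getLast hL).1 := by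
        show (((L.map fun p => (p.1, p.2⁻¹)).reverse).head hL''ne).1 = _
        rw [List.head_reverse, List.getLast_map]
      have hlast'' : (L''.getLast hL''ne).1 = (L.head hL).1 := by
        show (((L.map fun p => (p.1, p.2⁻¹)).reverse).getLast hL''ne).1 = _
        rw [List.getLast_reverse, List.head_map]
      have hop'' : (L''.head hL''ne).1 ≠ (L''.getLast hL''ne).1 := by
        rw [hhead'', hlast'']; exact fun e => hcl e.symm
      have hcard'' : 3 ≤ Cardinal.mk (H (L''.head hL''ne).1) := by
        rw [hhead'', ← hkl]; exact hk
      have := pp_open hm hne hdisj hpp L'' hL''ne hmem'' hch'' hop'' hcard''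
      intro he
      apply this
      have step1 : (L''.map Prod.snd) = (L.map fun p : Fin m × G => p.2⁻¹).reverse := by
        rw [hL'', List.map_reverse, List.map_map]
        rfl
      rw [step1, List.prod_reverse_noncomm, List.map_map]
      have step2 : (L.map ((fun x : G => x⁻¹) ∘ fun p : Fin m × G => p.2⁻¹))
          = L.map Prod.snd := by
        simp [Function.comp]
      rw [step2, he, inv_one]
    · -- k differs from both ends: conjugate by a nontrivial a ∈ H k
      obtain ⟨z, hz1, -⟩ := Cardinal.three_le hk 1 1
      set a : G := (z : G) with ha
      have ha1 : a ≠ 1 := fun e => hz1 (Subtype.ext e)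
      set L' : List (Fin m × G) := (k, a) :: (L ++ [(k, a⁻¹)]) with hL'
      have hL'ne : L' ≠ [] := List.cons_ne_nil _ _
      have hmem'2 : ∀ b ∈ L', b.2 ∈ H b.1 ∧ b.2 ≠ 1 := by
        intro b hb
        rw [hL', List.mem_cons, List.mem_append, List.mem_singleton] at hb
        rcases hb with rfl | hb | rfl
        · exact ⟨z.2, ha1⟩
        · exact hmem' b hb
        · exact ⟨inv_mem z.2, inv_ne_one.mpr ha1⟩
      have hch' : L'.Chain' fun b c => b.1 ≠ c.1 := by
        rw [hL', List.Chain', List.isChain_cons]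
        constructor
        · intro y hy
          rw [List.head?_append_of_ne_nil _ hL, List.head?_eq_head hL] at hy
          cases hy
          exact hk0
        · rw [List.isChain_append]
          refine ⟨hch, List.isChain_singleton _, ?_⟩
          intro y hy c hc
          rw [List.getLast?_eq_getLast hL] at hy
          cases hy
          simp only [List.head?_cons, Option.mem_some_iff] at hc
          subst hc
          exact fun e => hkl e.symm
      have hcl' : (L'.head hL'ne).1 = (L'.getLast hL'ne).1 := by
        have h2 : L'.getLast hL'ne = (k, a⁻¹) := by
          show ((k, a) :: (L ++ [(k, a⁻¹)])).getLast (List.cons_ne_nil _ _) = (k, a⁻¹)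
          simp
        rw [h2]
        rfl
      have hprod := pp_closed hm hne hdisj hpp L' hL'ne hmem'2 hch' hcl'
      intro he
      apply hprod
      show (((k, a) :: (L ++ [(k, a⁻¹)])).map Prod.snd).prod = 1
      simp [List.prod_append, he]
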